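/- There exists a constant C = C(n) < ∞ such that for every boundary M = ∂Ω of a convex body Ω ⊂ ℝ^{n+1} and every τ > 0, one has τ^{-n/2} ∫_M e^{-|y|²/τ} dℋⁿ(y) ≤ C. -/

import Mathlib

open MeasureTheory Set Filter
open scoped RealInnerProductSpace ENNReal NNReal Topology

noncomputable section
namespace Stmt2Aux


/-- Contraction property of metric projections onto convex sets. -/
lemma proj_contract {E : Type*} [NormedAddCommGroup E] [InnerProductSpace ℝ E]
    {x₁ x₂ y₁ y₂ : E} (h₁ : ⟪x₁ - y₁, y₂ - y₁⟫ ≤ 0) (h₂ : ⟪x₂ - y₂, y₁ - y₂⟫ ≤ 0) :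
    ‖y₁ - y₂‖ ≤ ‖x₁ - x₂‖ := by
  by_cases hd : y₁ = y₂
  · simp [hd]
  have expand : ⟪x₁ - x₂, y₁ - y₂⟫
      = ⟪x₁ - y₁, y₁ - y₂⟫ + ⟪y₁ - y₂, y₁ - y₂⟫ + ⟪y₂ - x₂, y₁ - y₂⟫ := by
    rw [← inner_add_left, ← inner_add_left]; congr 1; abel
  have e1 : ⟪x₁ - y₁, y₁ - y₂⟫ = -⟪x₁ - y₁, y₂ - y₁⟫ := by
    rw [← inner_neg_right]; congr 1; abel
  have e2 : ⟪y₂ - x₂, y₁ - y₂⟫ = -⟪x₂ - y₂, y₁ - y₂⟫ := by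
    rw [← inner_neg_left]; congr 1; abel
  have hsq : ‖y₁ - y₂‖ ^ 2 ≤ ⟪x₁ - x₂, y₁ - y₂⟫ := by
    rw [expand, e1, e2, real_inner_self_eq_norm_sq]; linarith
  have CS := real_inner_le_norm (x₁ - x₂) (y₁ - y₂)
  have hpos : 0 < ‖y₁ - y₂‖ := by
    rw [norm_pos_iff, sub_ne_zero]; exact hd
  nlinarith [norm_nonneg (x₁ - x₂)]



lemma exists_support {E : Type*} [NormedAddCommGroup E] [InnerProductSpace ℝ E]
    [CompleteSpace E] {Ω : Set E} (hconv : Convex ℝ Ω) (hint : (interior Ω).Nonempty)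
    {y : E} (hy : y ∈ frontier Ω) : ∃ ν : E, ν ≠ 0 ∧ ∀ z ∈ Ω, ⟪ν, z - y⟫ ≤ 0 := by
  obtain ⟨x₀, hx₀⟩ := hint
  have hyni : y ∉ interior Ω := hy.2
  obtain ⟨f, hf⟩ := geometric_hahn_banach_open_point hconv.interior isOpen_interior hyni
  have key : ∀ w ∈ Ω, f w ≤ f y := by
    intro w hw
    have hseq : ∀ m : ℕ, f ((((m:ℝ)+2)⁻¹) • x₀ + (1 - ((m:ℝ)+2)⁻¹) • w) < f y := by
      intro m
      have hmem : (((m:ℝ)+2)⁻¹) • x₀ + (1 - ((m:ℝ)+2)⁻¹) • w ∈ interior Ω := by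
        have h2 : (1:ℝ) ≤ (m:ℝ) + 2 := by
          have := Nat.cast_nonneg (α := ℝ) m; linarith
        exact hconv.combo_interior_self_subset_interior (a := ((m:ℝ)+2)⁻¹)
          (b := 1 - ((m:ℝ)+2)⁻¹)
          (by positivity) (by rw [sub_nonneg]; exact inv_le_one_of_one_le₀ h2) (by ring)
          (Set.add_mem_add (smul_mem_smul_set hx₀) (smul_mem_smul_set hw))
      exact hf _ hmem
    have h1 : Tendsto (fun m : ℕ => ((m:ℝ)+2)⁻¹) atTop (𝓝 0) := by
      apply tendsto_inv_atTop_zero.comp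
      exact tendsto_atTop_add_const_right _ 2 tendsto_natCast_atTop_atTop
    have hlim : Tendsto (fun m : ℕ => f ((((m:ℝ)+2)⁻¹) • x₀ + (1 - ((m:ℝ)+2)⁻¹) • w))
        atTop (𝓝 (f w)) := by
      have h2 : Tendsto (fun m : ℕ => (((m:ℝ)+2)⁻¹) • x₀ + (1 - ((m:ℝ)+2)⁻¹) • w)
          atTop (𝓝 w) := by
        have := (h1.smul_const x₀).add (((tendsto_const_nhds (x := (1:ℝ))).sub h1).smul_const w)
        simpa using this
      exact (f.continuous.tendsto w).comp h2
    exact le_of_tendsto hlim (Eventually.of_forall fun m => (hseq m).le)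
  refine ⟨(InnerProductSpace.toDual ℝ E).symm f, ?_, ?_⟩
  · intro h0
    have hfz : f = 0 := by
      have := congrArg (InnerProductSpace.toDual ℝ E) (h0 : _)
      simpa using this
    have := hf x₀ hx₀
    rw [hfz] at this
    simp at this
  · intro z hz
    have hle := key z hz
    have : ⟪(InnerProductSpace.toDual ℝ E).symm f, z - y⟫ = f z - f y := by
      rw [inner_sub_right, InnerProductSpace.toDual_symm_apply, InnerProductSpace.toDual_symm_apply]
    rw [this]
    linarith



lemma isometry_insertNth (n : ℕ) (i : Fin (n+1)) (c : ℝ) :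
    Isometry (fun u : EuclideanSpace ℝ (Fin n) =>
      ((WithLp.equiv 2 (Fin (n+1) → ℝ)).symm
        (i.insertNth c ((WithLp.equiv 2 (Fin n → ℝ)) u)) : EuclideanSpace ℝ (Fin (n+1)))) := by
  apply Isometry.of_dist_eq
  intro u v
  rw [EuclideanSpace.dist_eq, EuclideanSpace.dist_eq]
  congr 1
  rw [Fin.sum_univ_succAbove _ i]
  simp

/-- Hausdorff measure of the cube of half-side `r` in `EuclideanSpace ℝ (Fin n)`. -/
lemma cube_bound (n : ℕ) : ∃ A : ℝ≥0∞, A ≠ ⊤ ∧ ∀ r : ℝ, 0 ≤ r →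
    μH[(n:ℝ)] {u : EuclideanSpace ℝ (Fin n) | ∀ k, |u k| ≤ r}
      ≤ A * ENNReal.ofReal r ^ n := by
  set K : ℝ≥0 := (n : ℝ≥0) ^ ((1 / (2:ℝ≥0∞)).toReal)
  refine ⟨(K : ℝ≥0∞) ^ (n:ℝ) * ENNReal.ofReal 2 ^ n, ?_, ?_⟩
  · apply ENNReal.mul_ne_top
    · exact ENNReal.rpow_ne_top_of_nonneg (by positivity) ENNReal.coe_ne_top
    · exact ENNReal.pow_ne_top ENNReal.ofReal_ne_top
  intro r hr
  set ψ : (Fin n → ℝ) → EuclideanSpace ℝ (Fin n) := ⇑(WithLp.equiv 2 (Fin n → ℝ)).symm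
  have hψ : LipschitzWith K ψ := by
    apply LipschitzWith.of_dist_le_mul
    intro a b
    have := (PiLp.antilipschitzWith_ofLp 2 (fun _ : Fin n => ℝ)).le_mul_dist (ψ a) (ψ b)
    simpa [ψ, K] using this
  have hsub : {u : EuclideanSpace ℝ (Fin n) | ∀ k, |u k| ≤ r}
      ⊆ ψ '' (Icc (fun _ => -r) (fun _ => r)) := by
    intro u hu
    refine ⟨(WithLp.equiv 2 (Fin n → ℝ)) u, ?_, rfl⟩
    rw [Set.mem_Icc]
    exact ⟨Pi.le_def.mpr fun k => neg_le_of_abs_le (hu k),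
      Pi.le_def.mpr fun k => le_of_abs_le (hu k)⟩
  calc μH[(n:ℝ)] {u : EuclideanSpace ℝ (Fin n) | ∀ k, |u k| ≤ r}
      ≤ μH[(n:ℝ)] (ψ '' (Icc (fun _ => -r) (fun _ => r))) := measure_mono hsub
    _ ≤ (K : ℝ≥0∞) ^ (n:ℝ) * μH[(n:ℝ)] (Icc (fun (_ : Fin n) => -r) (fun _ => r)) :=
        hψ.hausdorffMeasure_image_le (by positivity) _
    _ = (K : ℝ≥0∞) ^ (n:ℝ) * volume (Icc (fun (_ : Fin n) => -r) (fun _ => r)) := by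
        congr 1
        have hcard : ((n:ℝ)) = ((Fintype.card (Fin n) : ℕ) : ℝ) := by simp
        rw [hcard, hausdorffMeasure_pi_real]
    _ = (K : ℝ≥0∞) ^ (n:ℝ) * (ENNReal.ofReal 2 ^ n * ENNReal.ofReal r ^ n) := by
        rw [Real.volume_Icc_pi]
        congr 1
        rw [Finset.prod_const]
        have : r - -r = 2 * r := by ring
        rw [this, ENNReal.ofReal_mul (by norm_num), mul_pow]
        simp
    _ = (K : ℝ≥0∞) ^ (n:ℝ) * ENNReal.ofReal 2 ^ n * ENNReal.ofReal r ^ n := by ring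


lemma coord_le_norm {m : ℕ} (w : EuclideanSpace ℝ (Fin m)) (j : Fin m) : |w j| ≤ ‖w‖ := by
  rw [EuclideanSpace.norm_eq, ← Real.sqrt_sq_eq_abs]
  apply Real.sqrt_le_sqrt
  have := Finset.single_le_sum (f := fun i => ‖w i‖ ^ 2)
    (fun i _ => by positivity) (Finset.mem_univ j)
  simpa [Real.norm_eq_abs, sq_abs] using this

lemma face_bound (n : ℕ) : ∃ A : ℝ≥0∞, A ≠ ⊤ ∧ ∀ (i : Fin (n+1)) (c r : ℝ), 0 ≤ r →
    μH[(n:ℝ)] {x : EuclideanSpace ℝ (Fin (n+1)) | x i = c ∧ ∀ j, |x j| ≤ r}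
      ≤ A * ENNReal.ofReal r ^ n := by
  obtain ⟨A, hA, hcube⟩ := cube_bound n
  refine ⟨A, hA, ?_⟩
  intro i c r hr
  set φ : EuclideanSpace ℝ (Fin n) → EuclideanSpace ℝ (Fin (n+1)) := fun u =>
    (WithLp.equiv 2 (Fin (n+1) → ℝ)).symm
      (i.insertNth c ((WithLp.equiv 2 (Fin n → ℝ)) u)) with hφdef
  have hφ : Isometry φ := isometry_insertNth n i c
  have hsub : {x : EuclideanSpace ℝ (Fin (n+1)) | x i = c ∧ ∀ j, |x j| ≤ r}
      ⊆ φ '' {u : EuclideanSpace ℝ (Fin n) | ∀ k, |u k| ≤ r} := by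
    rintro x ⟨hxi, hxj⟩
    refine ⟨(WithLp.equiv 2 (Fin n → ℝ)).symm (i.removeNth ((WithLp.equiv 2 (Fin (n+1) → ℝ)) x)),
      fun k => ?_, ?_⟩
    · simpa [Fin.removeNth] using hxj (i.succAbove k)
    · simp only [hφdef, Equiv.apply_symm_apply]
      rw [← hxi]
      have : (((WithLp.equiv 2 (Fin (n+1) → ℝ)) x) : Fin (n+1) → ℝ) i = x i := rfl
      rw [← this, Fin.insertNth_removeNth, Function.update_eq_self]
      simp
  calc μH[(n:ℝ)] {x : EuclideanSpace ℝ (Fin (n+1)) | x i = c ∧ ∀ j, |x j| ≤ r}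
      ≤ μH[(n:ℝ)] (φ '' {u : EuclideanSpace ℝ (Fin n) | ∀ k, |u k| ≤ r}) := measure_mono hsub
    _ = μH[(n:ℝ)] {u : EuclideanSpace ℝ (Fin n) | ∀ k, |u k| ≤ r} :=
        hφ.hausdorffMeasure_image (Or.inl (by positivity)) _
    _ ≤ A * ENNReal.ofReal r ^ n := hcube r hr

lemma frontier_ball_bound (n : ℕ) : ∃ A : ℝ≥0∞, A ≠ ⊤ ∧
    ∀ Ω : Set (EuclideanSpace ℝ (Fin (n+1))), Convex ℝ Ω → (interior Ω).Nonempty →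
      IsCompact Ω → ∀ r : ℝ, 0 < r →
        μH[(n:ℝ)] (frontier Ω ∩ Metric.closedBall 0 r) ≤ A * ENNReal.ofReal r ^ n := by
  obtain ⟨A₀, hA₀, hface⟩ := face_bound n
  refine ⟨((n:ℝ≥0∞)+1) * (2 * (A₀ * ENNReal.ofReal 2 ^ n)), ?_, ?_⟩
  · apply ENNReal.mul_ne_top (by simp)
    apply ENNReal.mul_ne_top (by simp)
    exact ENNReal.mul_ne_top hA₀ (ENNReal.pow_ne_top ENNReal.ofReal_ne_top)
  intro Ω hconv hint hcomp r hr
  have hcl : IsClosed Ω := hcomp.isClosed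
  have hne : Ω.Nonempty := ⟨hint.some, interior_subset hint.some_mem⟩
  -- the metric projection onto Ω
  have hproj : ∀ x : EuclideanSpace ℝ (Fin (n+1)),
      ∃ y, y ∈ Ω ∧ ∀ z ∈ Ω, ⟪x - y, z - y⟫ ≤ 0 := by
    intro x
    obtain ⟨v, hv, hmin⟩ :=
      exists_norm_eq_iInf_of_complete_convex hne hcl.isComplete hconv x
    exact ⟨v, hv, (norm_eq_iInf_iff_real_inner_le_zero hconv hv).1 hmin⟩
  choose P hPmem hPvar using hproj
  have hlip : LipschitzWith 1 P := by
    apply LipschitzWith.of_dist_le_mul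
    intro x₁ x₂
    rw [NNReal.coe_one, one_mul, dist_eq_norm, dist_eq_norm]
    exact proj_contract (hPvar x₁ _ (hPmem x₂)) (hPvar x₂ _ (hPmem x₁))
  -- the boundary of the cube of half-side 2r
  set F : Set (EuclideanSpace ℝ (Fin (n+1))) :=
    ⋃ i : Fin (n+1), ({x | x i = 2*r ∧ ∀ j, |x j| ≤ 2*r} ∪
      {x | x i = -(2*r) ∧ ∀ j, |x j| ≤ 2*r}) with hFdef
  have hcover : frontier Ω ∩ Metric.closedBall 0 r ⊆ P '' F := by
    rintro y ⟨hyM, hyB⟩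
    have hyΩ : y ∈ Ω := hcl.frontier_subset hyM
    have hynorm : ‖y‖ ≤ r := mem_closedBall_zero_iff.1 hyB
    obtain ⟨ν, hν0, hνsep⟩ := exists_support hconv hint hyM
    obtain ⟨j, hj⟩ : ∃ j, ν j ≠ 0 := by
      by_contra h
      push_neg at h
      exact hν0 (by ext j; exact h j)
    set e : EuclideanSpace ℝ (Fin (n+1)) → (Fin (n+1) → ℝ) :=
      ⇑(WithLp.equiv 2 (Fin (n+1) → ℝ)) with hedef
    have hsup_le : ∀ w : EuclideanSpace ℝ (Fin (n+1)), ‖e w‖ ≤ ‖w‖ := by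
      intro w
      have h := (PiLp.lipschitzWith_ofLp 2 (fun _ : Fin (n+1) => ℝ)).dist_le_mul w 0
      simpa [hedef, dist_zero_right, WithLp.ofLp_zero, WithLp.equiv_apply] using h
    set g : ℝ → ℝ := fun t => ‖e (y + t • ν)‖ with hgdef
    have hgc : Continuous g := by
      apply Continuous.norm
      exact (PiLp.lipschitzWith_ofLp 2 (fun _ : Fin (n+1) => ℝ)).continuous.comp
        (continuous_const.add (continuous_id.smul continuous_const))
    set T : ℝ := 3 * r / |ν j| with hTdef
    have hT : 0 < T := by positivity
    have hg0 : g 0 ≤ r := by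
      simp only [hgdef, zero_smul, add_zero]
      exact le_trans (hsup_le y) hynorm
    have hgT : 2 * r ≤ g T := by
      have hcomp1 : |y j + T * ν j| ≤ g T := by
        have h1 : |(e (y + T • ν)) j| ≤ ‖e (y + T • ν)‖ := by
          simpa [Real.norm_eq_abs] using norm_le_pi_norm (e (y + T • ν)) j
        have h2 : (e (y + T • ν)) j = y j + T * ν j := by
          simp [hedef, WithLp.equiv_apply, PiLp.add_apply, PiLp.smul_apply, smul_eq_mul]
        rw [h2] at h1
        exact h1
      have hyj : |y j| ≤ r := le_trans (coord_le_norm y j) hynorm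
      have hTν : |T * ν j| = 3 * r := by
        rw [abs_mul, abs_of_pos hT, hTdef]
        field_simp
      have : |T * ν j| - |y j| ≤ |y j + T * ν j| := by
        have := abs_sub_abs_le_abs_sub (T * ν j) (-(y j))
        simp only [abs_neg, sub_neg_eq_add] at this
        calc |T * ν j| - |y j| ≤ |T * ν j + y j| := this
          _ = |y j + T * ν j| := by rw [add_comm]
      linarith
    obtain ⟨t, htI, hgt⟩ := intermediate_value_Icc hT.le hgc.continuousOn
      (⟨by linarith, hgT⟩ : 2 * r ∈ Icc (g 0) (g T))
    set x : EuclideanSpace ℝ (Fin (n+1)) := y + t • ν with hxdef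
    have hallj : ∀ j', |x j'| ≤ 2 * r := by
      intro j'
      have h1 : |(e x) j'| ≤ ‖e x‖ := by
        simpa [Real.norm_eq_abs] using norm_le_pi_norm (e x) j'
      have h2 : (e x) j' = x j' := rfl
      rw [h2] at h1
      exact h1.trans_eq hgt
    have hxF : x ∈ F := by
      obtain ⟨i, -, hi⟩ := Finset.exists_mem_eq_sup Finset.univ Finset.univ_nonempty
        (fun b => ‖(e x) b‖₊)
      have hnorm_eq : ‖e x‖ = |x i| := by
        rw [Pi.norm_def, hi]
        rfl
      have hex : ‖e x‖ = 2 * r := hgt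
      have hxi : |x i| = 2 * r := by rw [← hnorm_eq, hex]
      rw [hFdef]
      apply Set.mem_iUnion.2 ⟨i, ?_⟩
      rcases abs_eq (by positivity : (0:ℝ) ≤ 2*r) |>.1 hxi with h | h
      · exact Or.inl ⟨h, hallj⟩
      · exact Or.inr ⟨h, hallj⟩
    have hyvar : ∀ z ∈ Ω, ⟪x - y, z - y⟫ ≤ 0 := by
      intro z hz
      have hxy : x - y = t • ν := by rw [hxdef]; abel
      rw [hxy, real_inner_smul_left]
      exact mul_nonpos_of_nonneg_of_nonpos htI.1 (hνsep z hz)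
    have hPx : P x = y := by
      have h := proj_contract (hPvar x _ hyΩ) (hyvar (P x) (hPmem x))
      rw [sub_self, norm_zero] at h
      rw [← sub_eq_zero]
      exact norm_le_zero_iff.1 h
    exact ⟨x, hxF, hPx⟩
  -- putting the measure estimates together
  calc μH[(n:ℝ)] (frontier Ω ∩ Metric.closedBall 0 r)
      ≤ μH[(n:ℝ)] (P '' F) := measure_mono hcover
    _ ≤ ((1:ℝ≥0) : ℝ≥0∞) ^ (n:ℝ) * μH[(n:ℝ)] F :=
        hlip.hausdorffMeasure_image_le (by positivity) F
    _ = μH[(n:ℝ)] F := by simp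
    _ ≤ ∑' i : Fin (n+1), μH[(n:ℝ)] ({x : EuclideanSpace ℝ (Fin (n+1)) |
          x i = 2*r ∧ ∀ j, |x j| ≤ 2*r} ∪ {x | x i = -(2*r) ∧ ∀ j, |x j| ≤ 2*r}) :=
        measure_iUnion_le _
    _ ≤ ∑' i : Fin (n+1), (2 * (A₀ * ENNReal.ofReal (2*r) ^ n)) := by
        apply ENNReal.tsum_le_tsum
        intro i
        refine le_trans (measure_union_le _ _) ?_
        have h1 := hface i (2*r) (2*r) (by positivity)
        have h2 := hface i (-(2*r)) (2*r) (by positivity)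
        calc _ ≤ A₀ * ENNReal.ofReal (2*r) ^ n + A₀ * ENNReal.ofReal (2*r) ^ n :=
              add_le_add h1 h2
          _ = 2 * (A₀ * ENNReal.ofReal (2*r) ^ n) := by ring
    _ = ((n:ℝ≥0∞)+1) * (2 * (A₀ * ENNReal.ofReal (2*r) ^ n)) := by
        rw [tsum_fintype]
        simp [Finset.sum_const, Finset.card_univ, nsmul_eq_mul]
    _ = ((n:ℝ≥0∞)+1) * (2 * (A₀ * ENNReal.ofReal 2 ^ n)) * ENNReal.ofReal r ^ n := by
        rw [ENNReal.ofReal_mul (by norm_num), mul_pow]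
        ring

lemma gauss_summable (n : ℕ) :
    Summable (fun k : ℕ => Real.exp (-(k:ℝ)^2) * ((k:ℝ)+1)^n) := by
  set rr : ℝ := Real.exp (-1) with hrr
  have hrpos : 0 < rr := Real.exp_pos _
  have hrlt : ‖rr‖ < 1 := by
    rw [Real.norm_eq_abs, abs_of_pos hrpos]
    exact Real.exp_lt_one_iff.2 (by norm_num)
  have hgeom : Summable (fun k : ℕ => (k:ℝ)^n * rr^k) :=
    summable_pow_mul_geometric_of_norm_lt_one n hrlt
  have h1 : Summable (fun k : ℕ => ((k:ℝ)+1)^n * rr^(k+1)) := by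
    have := (summable_nat_add_iff 1).mpr hgeom
    apply this.congr
    intro k
    push_cast
    ring
  have h2 : Summable (fun k : ℕ => ((k:ℝ)+1)^n * rr^k) := by
    have := h1.mul_left rr⁻¹
    apply this.congr
    intro k
    rw [pow_succ]
    field_simp
  apply Summable.of_nonneg_of_le (fun k => by positivity) (fun k => ?_) h2
  have hexp : Real.exp (-(k:ℝ)^2) ≤ rr^k := by
    rw [hrr, ← Real.exp_nat_mul]
    apply Real.exp_le_exp.2
    rcases Nat.eq_zero_or_pos k with h | h
    · simp [h]
    · have h1k : (1:ℝ) ≤ (k:ℝ) := by exact_mod_cast h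
      nlinarith
  calc Real.exp (-(k:ℝ)^2) * ((k:ℝ)+1)^n ≤ rr^k * ((k:ℝ)+1)^n := by
        apply mul_le_mul_of_nonneg_right hexp (by positivity)
    _ = ((k:ℝ)+1)^n * rr^k := by ring

lemma gauss_lintegral_bound (n : ℕ) : ∃ B : ℝ≥0∞, B ≠ ⊤ ∧
    ∀ Ω : Set (EuclideanSpace ℝ (Fin (n+1))), Convex ℝ Ω → (interior Ω).Nonempty →
      IsCompact Ω → ∀ τ : ℝ, 0 < τ →
        ∫⁻ y in frontier Ω, ENNReal.ofReal (Real.exp (-‖y‖^2 / τ)) ∂(μH[(n:ℝ)])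
          ≤ B * ENNReal.ofReal (Real.sqrt τ) ^ n := by
  obtain ⟨A, hA, hball⟩ := frontier_ball_bound n
  set S : ℝ≥0∞ := ∑' k : ℕ, ENNReal.ofReal (Real.exp (-(k:ℝ)^2) * ((k:ℝ)+1)^n) with hSdef
  have hS : S ≠ ⊤ := by
    rw [hSdef, ← ENNReal.ofReal_tsum_of_nonneg (fun k => by positivity) (gauss_summable n)]
    exact ENNReal.ofReal_ne_top
  refine ⟨A * S, ENNReal.mul_ne_top hA hS, ?_⟩
  intro Ω hconv hint hcomp τ hτ
  set s : ℝ := Real.sqrt τ with hsdef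
  have hs : 0 < s := Real.sqrt_pos.2 hτ
  set D : ℕ → Set (EuclideanSpace ℝ (Fin (n+1))) :=
    fun k => {y | (k:ℝ) * s ≤ ‖y‖ ∧ ‖y‖ < ((k:ℝ)+1) * s} with hDdef
  have hDmeas : ∀ k, MeasurableSet (D k) := by
    intro k
    exact (measurableSet_le measurable_const measurable_norm).inter
      (measurableSet_lt measurable_norm measurable_const)
  have hpt : ∀ y : EuclideanSpace ℝ (Fin (n+1)),
      ENNReal.ofReal (Real.exp (-‖y‖^2 / τ))
        ≤ ∑' k : ℕ, Set.indicator (D k)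
            (fun _ => ENNReal.ofReal (Real.exp (-(k:ℝ)^2))) y := by
    intro y
    set k : ℕ := ⌊‖y‖ / s⌋₊ with hkdef
    have hk1 : (k:ℝ) * s ≤ ‖y‖ := by
      rw [← le_div_iff₀ hs]
      exact Nat.floor_le (by positivity)
    have hk2 : ‖y‖ < ((k:ℝ)+1) * s := by
      rw [← div_lt_iff₀ hs]
      exact Nat.lt_floor_add_one _
    refine le_trans ?_ (ENNReal.le_tsum k)
    have hmem : y ∈ D k := ⟨hk1, hk2⟩
    rw [Set.indicator_of_mem hmem]
    apply ENNReal.ofReal_le_ofReal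
    apply Real.exp_le_exp.2
    have hτs : s^2 = τ := Real.sq_sqrt hτ.le
    rw [neg_div, neg_le_neg_iff, le_div_iff₀ hτ]
    have hks : 0 ≤ (k:ℝ) * s := by positivity
    nlinarith [norm_nonneg y]
  calc ∫⁻ y in frontier Ω, ENNReal.ofReal (Real.exp (-‖y‖^2 / τ)) ∂(μH[(n:ℝ)])
      ≤ ∫⁻ y in frontier Ω, (∑' k : ℕ, Set.indicator (D k)
          (fun _ => ENNReal.ofReal (Real.exp (-(k:ℝ)^2))) y) ∂(μH[(n:ℝ)]) :=
        lintegral_mono hpt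
    _ = ∑' k : ℕ, ∫⁻ y in frontier Ω, Set.indicator (D k)
          (fun _ => ENNReal.ofReal (Real.exp (-(k:ℝ)^2))) y ∂(μH[(n:ℝ)]) :=
        lintegral_tsum (fun k => ((measurable_const.indicator (hDmeas k)).aemeasurable))
    _ ≤ ∑' k : ℕ, ENNReal.ofReal (Real.exp (-(k:ℝ)^2)) *
          (A * ENNReal.ofReal (((k:ℝ)+1) * s) ^ n) := by
        apply ENNReal.tsum_le_tsum
        intro k
        rw [lintegral_indicator (hDmeas k), setLIntegral_const, Measure.restrict_apply (hDmeas k)]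
        apply mul_le_mul_right
        refine le_trans (measure_mono ?_) (hball Ω hconv hint hcomp (((k:ℝ)+1) * s) (by positivity))
        rintro y ⟨⟨-, hy2⟩, hyM⟩
        exact ⟨hyM, mem_closedBall_zero_iff.2 hy2.le⟩
    _ = (A * ENNReal.ofReal s ^ n) * S := by
        rw [hSdef, ← ENNReal.tsum_mul_left]
        apply tsum_congr
        intro k
        rw [ENNReal.ofReal_mul (by positivity), mul_pow,
          ENNReal.ofReal_mul (by positivity : (0:ℝ) ≤ Real.exp (-(k:ℝ)^2)),
          ENNReal.ofReal_pow (by positivity)]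
        ring
    _ = (A * S) * ENNReal.ofReal s ^ n := by ring

end Stmt2Aux

open Stmt2Aux in
theorem stmt_2 (n : ℕ) :
    ∃ C : ℝ, ∀ Ω : Set (EuclideanSpace ℝ (Fin (n + 1))),
      Convex ℝ Ω → (interior Ω).Nonempty → IsCompact Ω →
      ∀ τ : ℝ, 0 < τ →
        τ ^ (-(n : ℝ) / 2) *
          ∫ y in frontier Ω, Real.exp (-‖y‖ ^ 2 / τ) ∂(μH[(n : ℝ)]) ≤ C := by
  obtain ⟨B, hB, hbound⟩ := gauss_lintegral_bound n
  refine ⟨B.toReal, ?_⟩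
  intro Ω hconv hint hcomp τ hτ
  have hint_eq : ∫ y in frontier Ω, Real.exp (-‖y‖ ^ 2 / τ) ∂(μH[(n:ℝ)])
      = (∫⁻ y in frontier Ω, ENNReal.ofReal (Real.exp (-‖y‖^2 / τ)) ∂(μH[(n:ℝ)])).toReal := by
    apply integral_eq_lintegral_of_nonneg_ae
    · exact Filter.Eventually.of_forall fun y => (Real.exp_pos _).le
    · exact (Real.continuous_exp.comp
        ((continuous_norm.pow 2).neg.div_const τ)).aestronglyMeasurable
  have hfin : B * ENNReal.ofReal (Real.sqrt τ) ^ n ≠ ⊤ :=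
    ENNReal.mul_ne_top hB (ENNReal.pow_ne_top ENNReal.ofReal_ne_top)
  have h1 : (∫⁻ y in frontier Ω, ENNReal.ofReal (Real.exp (-‖y‖^2 / τ)) ∂(μH[(n:ℝ)])).toReal
      ≤ (B * ENNReal.ofReal (Real.sqrt τ) ^ n).toReal :=
    ENNReal.toReal_mono hfin (hbound Ω hconv hint hcomp τ hτ)
  have h2 : (B * ENNReal.ofReal (Real.sqrt τ) ^ n).toReal = B.toReal * (Real.sqrt τ) ^ n := by
    rw [ENNReal.toReal_mul, ENNReal.toReal_pow, ENNReal.toReal_ofReal (Real.sqrt_nonneg τ)]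
  have hsq : (Real.sqrt τ) ^ n = τ ^ ((n:ℝ)/2) := by
    rw [Real.sqrt_eq_rpow, ← Real.rpow_natCast (τ ^ ((1:ℝ)/2)) n, ← Real.rpow_mul hτ.le]
    congr 1
    ring
  have hkey : τ ^ (-(n:ℝ)/2) * τ ^ ((n:ℝ)/2) = 1 := by
    have h0 : (-(n:ℝ)/2 + (n:ℝ)/2) = 0 := by ring
    rw [← Real.rpow_add hτ, h0, Real.rpow_zero]
  calc τ ^ (-(n : ℝ) / 2) * ∫ y in frontier Ω, Real.exp (-‖y‖ ^ 2 / τ) ∂(μH[(n : ℝ)])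
      ≤ τ ^ (-(n:ℝ)/2) * (B.toReal * τ ^ ((n:ℝ)/2)) := by
        apply mul_le_mul_of_nonneg_left _ (Real.rpow_nonneg hτ.le _)
        rw [hint_eq]
        exact le_trans h1 (le_of_eq (by rw [h2, hsq]))
    _ = B.toReal * (τ ^ (-(n:ℝ)/2) * τ ^ ((n:ℝ)/2)) := by ring
    _ = B.toReal := by rw [hkey, mul_one]
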